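/- Let A be a Cohen-Macaulay Noetherian local ring (not necessarily a domain) and let 0 → Aⁿ →(ρ₁;ρ₂) A^{2n} →(τ₁ τ₂) Aⁿ → M → 0 be an exact sequence of finite free A-modules, where τ₁, τ₂, ρ₁, ρ₂ are n×n matrices over A. Then there exists an invertible matrix P ∈ GL_{2n}(A) such that, writing (τ₁' τ₂') = (τ₁ τ₂)·P, the determinant det(τ₁') lies outside every associated prime of A, i.e. det(τ₁') is a nonzerodivisor on A. -/

import Mathlib

set_option maxHeartbeats 1000000


open Matrix IsLocalRing

def depthGE (A : Type) [CommRing A] (I : Ideal A) (M : Type) [AddCommGroup M] [Module A M]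
    (n : ℕ) : Prop :=
  ∃ rs : List A, rs.length = n ∧ (∀ x ∈ rs, x ∈ I) ∧ RingTheory.Sequence.IsRegular M rs

def IsCMLocalRing (A : Type) [CommRing A] [IsLocalRing A] : Prop :=
  ∃ rs : List A, (∀ x ∈ rs, x ∈ maximalIdeal A) ∧ RingTheory.Sequence.IsRegular A rs ∧
    (rs.length : WithBot ℕ∞) = ringKrullDim A

def IsFreeRes₂ (A : Type) [CommRing A] {R : Type} [AddCommGroup R] [Module A R]
    {ι₀ ι₁ ι₂ : Type} [Fintype ι₀] [Fintype ι₁] [Fintype ι₂]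
    (φ : Matrix ι₀ ι₁ A) (ψ : Matrix ι₁ ι₂ A) (p : (ι₀ → A) →ₗ[A] R) : Prop :=
  Function.Surjective p ∧ LinearMap.ker p = LinearMap.range φ.mulVecLin ∧
    LinearMap.ker φ.mulVecLin = LinearMap.range ψ.mulVecLin ∧
    LinearMap.ker ψ.mulVecLin = ⊥


/-- Prime avoidance for submodules: given finitely many distinct primes `p ∈ S` and for each a
submodule `U p` which contains `p • ⊤`, is "saturated" outside `p`, and is not everything,
there is a common element avoiding all `U p`. -/
lemma avoid_lemma {A : Type*} [CommRing A] {M : Type*} [AddCommGroup M] [Module A M]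
    (S : Finset (Ideal A)) (hprime : ∀ p ∈ S, p.IsPrime)
    (U : Ideal A → Submodule A M)
    (hmem : ∀ p ∈ S, ∀ a ∈ p, ∀ z : M, a • z ∈ U p)
    (hsat : ∀ p ∈ S, ∀ a ∉ p, ∀ z : M, a • z ∈ U p → z ∈ U p)
    (hwit : ∀ p ∈ S, ∃ d : M, d ∉ U p) :
    ∃ c : M, ∀ p ∈ S, c ∉ U p := by
  classical
  induction S using Finset.strongInduction with
  | _ S ih =>
  rcases S.eq_empty_or_nonempty with rfl | hne
  · exact ⟨0, by simp⟩
  obtain ⟨p₀, hp₀S, hp₀min⟩ := S.exists_minimal hne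
  have hSsub : S.erase p₀ ⊂ S := Finset.erase_ssubset hp₀S
  obtain ⟨c, hc⟩ := ih (S.erase p₀) hSsub
    (fun p hp => hprime p (Finset.mem_of_mem_erase hp))
    (fun p hp => hmem p (Finset.mem_of_mem_erase hp))
    (fun p hp => hsat p (Finset.mem_of_mem_erase hp))
    (fun p hp => hwit p (Finset.mem_of_mem_erase hp))
  by_cases hc₀ : c ∉ U p₀
  · refine ⟨c, fun p hp => ?_⟩
    by_cases hpp : p = p₀
    · exact hpp ▸ hc₀
    · exact hc p (Finset.mem_erase.mpr ⟨hpp, hp⟩)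
  push_neg at hc₀
  obtain ⟨d, hd⟩ := hwit p₀ hp₀S
  have hex : ∀ p ∈ S.erase p₀, ∃ a, a ∈ p ∧ a ∉ p₀ := by
    intro p hp
    have hpS := Finset.mem_of_mem_erase hp
    have hne' : p ≠ p₀ := Finset.ne_of_mem_erase hp
    by_contra h
    push_neg at h
    exact hne' (le_antisymm (fun a ha => h a ha) (hp₀min hpS (fun a ha => h a ha)))
  choose a ha₁ ha₂ using hex
  set b : A := ∏ p ∈ (S.erase p₀).attach, a p.1 p.2 with hb
  have hbmem : ∀ p ∈ S.erase p₀, b ∈ p := by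
    intro p hp
    have : a p hp ∣ b := Finset.dvd_prod_of_mem _ (Finset.mem_attach _ ⟨p, hp⟩)
    obtain ⟨t, ht⟩ := this
    rw [ht]
    exact Ideal.mul_mem_right _ _ (ha₁ p hp)
  have hbp₀ : b ∉ p₀ := by
    have hp₀prime := hprime p₀ hp₀S
    refine Finset.prod_induction _ (fun x => x ∉ p₀) ?_ ?_ ?_
    · intro x y hx hy hxy
      rcases hp₀prime.mem_or_mem hxy with h | h
      exacts [hx h, hy h]
    · simpa using hp₀prime.ne_top ∘ (Ideal.eq_top_iff_one p₀).mpr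
    · exact fun p _ => ha₂ p.1 p.2
  refine ⟨c + b • d, fun p hp => ?_⟩
  by_cases hpp : p = p₀
  · subst hpp
    intro hmemU
    have hbd : b • d ∈ U p := by
      have := (U p).sub_mem hmemU hc₀
      simpa using this
    exact hd (hsat p hp b hbp₀ d hbd)
  · intro hmemU
    have hpe : p ∈ S.erase p₀ := Finset.mem_erase.mpr ⟨hpp, hp⟩
    have hcmem : c ∈ U p := by
      have := (U p).sub_mem hmemU (hmem p hp b (hbmem p hpe) d)
      simpa using this
    exact hc p hpe hcmem


/-- Pull back a `K`-subspace of `ι → K` to an `A`-submodule of `ι → A` along a ring hom. -/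
def preSub {A K : Type*} [CommRing A] [CommRing K] (f : A →+* K) {ι : Type*}
    (V : Submodule K (ι → K)) : Submodule A (ι → A) where
  carrier := {z | (fun i => f (z i)) ∈ V}
  add_mem' := by
    intro a b ha hb
    have : (fun i => f ((a + b) i)) = (fun i => f (a i)) + (fun i => f (b i)) := by
      funext i; simp [map_add]
    show (fun i => f ((a + b) i)) ∈ V
    rw [this]; exact V.add_mem ha hb
  zero_mem' := by
    have : (fun i : ι => f ((0 : ι → A) i)) = 0 := by funext i; simp
    simp only [Set.mem_setOf_eq, this]; exact V.zero_mem
  smul_mem' := by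
    intro c z hz
    have : (fun i => f ((c • z) i)) = f c • (fun i => f (z i)) := by
      funext i; simp [Pi.smul_apply, _root_.map_mul]
    show (fun i => f ((c • z) i)) ∈ V
    rw [this]; exact V.smul_mem (f c) hz

lemma mem_preSub {A K : Type*} [CommRing A] [CommRing K] (f : A →+* K) {ι : Type*}
    (V : Submodule K (ι → K)) (z : ι → A) :
    z ∈ preSub f V ↔ (fun i => f (z i)) ∈ V := Iff.rfl

lemma preSub_smul_mem {A K : Type*} [CommRing A] [CommRing K] (f : A →+* K) {ι : Type*}
    (V : Submodule K (ι → K)) {a : A} (ha : f a = 0) (z : ι → A) : a • z ∈ preSub f V := by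
  rw [mem_preSub]
  have : (fun i => f ((a • z) i)) = (0 : ι → K) := by
    funext i; simp [Pi.smul_apply, _root_.map_mul, ha]
  rw [this]; exact V.zero_mem

lemma preSub_sat {A K : Type*} [CommRing A] [Field K] (f : A →+* K) {ι : Type*}
    (V : Submodule K (ι → K)) {a : A} (ha : f a ≠ 0) (z : ι → A)
    (h : a • z ∈ preSub f V) : z ∈ preSub f V := by
  rw [mem_preSub] at h ⊢
  have hz : (fun i => f ((a • z) i)) = f a • (fun i => f (z i)) := by
    funext i; simp [Pi.smul_apply, _root_.map_mul]
  rw [hz] at h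
  have := V.smul_mem (f a)⁻¹ h
  rwa [smul_smul, inv_mul_cancel₀ ha, one_smul] at this

lemma preSub_wit {A K : Type*} [CommRing A] [Field K] (f : A →+* K) {ι : Type*} [Fintype ι]
    [DecidableEq ι] (V : Submodule K (ι → K)) (hV : V ≠ ⊤) : ∃ d : ι → A, d ∉ preSub f V := by
  by_contra h
  push_neg at h
  apply hV
  rw [eq_top_iff, ← (Pi.basisFun K ι).span_eq, Submodule.span_le]
  rintro v ⟨i, rfl⟩
  have := h (Pi.single i 1 : ι → A)
  rw [mem_preSub] at this
  have heq : (fun j => f ((Pi.single i 1 : ι → A) j)) = Pi.basisFun K ι i := by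
    funext j
    by_cases hji : j = i <;> simp [Pi.single_apply, hji]
  rwa [heq] at this

section AuxAss
open Submodule


lemma ass_quot_finite {A : Type*} [CommRing A] [IsNoetherianRing A]
    (N : Submodule A A) : (associatedPrimes A (A ⧸ N)).Finite := by
  exact associatedPrimes.finite A (A ⧸ N)

lemma associatedPrimes_finite (A : Type*) [CommRing A] [IsNoetherianRing A] :
    (associatedPrimes A A).Finite := by
  have h := ass_quot_finite (⊥ : Submodule A A)
  refine h.subset (associatedPrimes.subset_of_injective (f := Submodule.mkQ ⊥) ?_)
  rw [← LinearMap.ker_eq_bot, Submodule.ker_mkQ]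

end AuxAss


lemma comp_snoc' {j : ℕ} {α : Type*} {β : Type*} (F : α → β) (c : Fin j → α) (d : α) :
    (fun i : Fin (j + 1) => F ((Fin.snoc c d : Fin (j+1) → α) i)) = Fin.snoc (fun i => F (c i)) (F d) := by
  funext i
  refine Fin.lastCases ?_ (fun i => ?_) i <;> simp

lemma span_range_ne_top {K V : Type*} [Field K] [AddCommGroup V] [Module K V]
    [FiniteDimensional K V] {j : ℕ} (hj : j < Module.finrank K V) (g : Fin j → V) :
    Submodule.span K (Set.range g) ≠ ⊤ := by
  intro h
  have h1 : Module.finrank K (Submodule.span K (Set.range g)) ≤ j := by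
    classical
    haveI : Fintype (Set.range g) := Set.fintypeRange g
    refine le_trans (finrank_span_le_card (Set.range g)) ?_
    rw [Set.toFinset_range]
    exact le_trans (Finset.card_image_le) (by simp)
  rw [h, finrank_top] at h1
  omega

lemma comap_ne_top' {K V W : Type*} [Field K] [AddCommGroup V] [Module K V]
    [AddCommGroup W] [Module K W] (T : V →ₗ[K] W) (hT : Function.Surjective T)
    {U : Submodule K W} (hU : U ≠ ⊤) : U.comap T ≠ ⊤ := by
  intro h
  apply hU
  rw [eq_top_iff]
  intro w _
  obtain ⟨v, rfl⟩ := hT w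
  have hv : v ∈ U.comap T := by rw [h]; trivial
  exact hv

lemma toCols₁_mul {R : Type*} [CommRing R] {r m n₁ n₂ : Type*} [Fintype m]
    (M : Matrix r m R) (P : Matrix m (n₁ ⊕ n₂) R) :
    (M * P).toCols₁ = M * P.toCols₁ := by
  ext i j
  simp [toCols₁, Matrix.mul_apply]


lemma map_mulVec' {A K : Type*} [CommRing A] [CommRing K] (f : A →+* K)
    {ι κ : Type*} [Fintype κ] (M : Matrix ι κ A) (w : κ → A) :
    (M.map f).mulVec (fun j => f (w j)) = fun i => f (M.mulVec w i) := by
  funext i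
  simp [Matrix.mulVec, dotProduct, map_sum, _root_.map_mul]

/-- Key lemma: over `A` with an exact complex `0 → Aⁿ → A²ⁿ → Aⁿ`, for any "residue field map"
`f : A → K` whose kernel is the annihilator of `x`, the matrix `τ` becomes surjective over `K`. -/
lemma key_surjective {A K : Type*} [CommRing A] [Field K] (f : A →+* K) (x : A)
    (hker : ∀ a : A, f a = 0 ↔ a * x = 0)
    {n : ℕ} (τ : Matrix (Fin n) (Fin n ⊕ Fin n) A) (ρ : Matrix (Fin n ⊕ Fin n) (Fin n) A)
    (hexact : LinearMap.ker τ.mulVecLin = LinearMap.range ρ.mulVecLin)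
    (hinj : LinearMap.ker ρ.mulVecLin = ⊥)
    (hd1 : ∀ v : (Fin n ⊕ Fin n) → K,
      ∃ (w : (Fin n ⊕ Fin n) → A) (s : A), f s ≠ 0 ∧ ∀ i, f s * v i = f (w i))
    (hd2 : ∀ v : Fin n → K, ∃ (w : Fin n → A) (s : A), f s ≠ 0 ∧ ∀ i, f s * v i = f (w i)) :
    Function.Surjective (τ.map f).mulVecLin := by
  classical
  -- ρ over K is injective
  have hinjK : LinearMap.ker (ρ.map f).mulVecLin = ⊥ := by
    rw [eq_bot_iff]
    intro v hv
    rw [LinearMap.mem_ker, Matrix.mulVecLin_apply] at hv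
    obtain ⟨w, s, hs, hsw⟩ := hd2 v
    have hfw : (fun j => f (w j)) = f s • v := by
      funext j; rw [Pi.smul_apply, smul_eq_mul, hsw j]
    have h0 : (fun i => f (ρ.mulVec w i)) = 0 := by
      rw [← map_mulVec', hfw, Matrix.mulVec_smul, hv, smul_zero]
    have hx0 : ρ.mulVec (x • w) = 0 := by
      funext i
      have : ρ.mulVec w i * x = 0 := (hker _).mp (congrFun h0 i)
      calc ρ.mulVec (x • w) i = x * ρ.mulVec w i := by
            simp [Matrix.mulVec_smul, smul_eq_mul]
        _ = 0 := by rw [mul_comm]; exact this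
    have : x • w ∈ LinearMap.ker ρ.mulVecLin := by
      rw [LinearMap.mem_ker, Matrix.mulVecLin_apply]; exact hx0
    rw [hinj, Submodule.mem_bot] at this
    have hw0 : ∀ j, f (w j) = 0 := by
      intro j
      rw [hker]
      have := congrFun this j
      rw [Pi.smul_apply, smul_eq_mul] at this
      rw [mul_comm]; exact this
    rw [Submodule.mem_bot]
    funext j
    have := hsw j
    rw [hw0 j] at this
    exact (mul_eq_zero.mp this).resolve_left hs
  -- the composite is zero over A
  have hcompA : τ * ρ = 0 := by
    ext i j
    have hcol : (fun k => ρ k j) ∈ LinearMap.range ρ.mulVecLin := by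
      refine ⟨Pi.single j 1, ?_⟩
      rw [Matrix.mulVecLin_apply]
      funext k
      simp [Matrix.mulVec_single]
    rw [← hexact, LinearMap.mem_ker, Matrix.mulVecLin_apply] at hcol
    have := congrFun hcol i
    simpa [Matrix.mulVec, dotProduct, Matrix.mul_apply] using this
  have hcompK : ∀ u : Fin n → K, (τ.map f).mulVec ((ρ.map f).mulVec u) = 0 := by
    intro u
    rw [Matrix.mulVec_mulVec, ← Matrix.map_mul (f := f), hcompA]
    funext i
    simp [Matrix.mulVec]
  -- kernel of τ over K is contained in range of ρ over K
  have hsub : LinearMap.ker (τ.map f).mulVecLin ≤ LinearMap.range (ρ.map f).mulVecLin := by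
    intro v hv
    rw [LinearMap.mem_ker, Matrix.mulVecLin_apply] at hv
    obtain ⟨w, s, hs, hsw⟩ := hd1 v
    have hfw : (fun j => f (w j)) = f s • v := by
      funext j; rw [Pi.smul_apply, smul_eq_mul, hsw j]
    suffices hwmem : (fun j => f (w j)) ∈ LinearMap.range (ρ.map f).mulVecLin by
      have hv' : v = (f s)⁻¹ • (fun j => f (w j)) := by
        rw [hfw, smul_smul, inv_mul_cancel₀ hs, one_smul]
      rw [hv']
      exact Submodule.smul_mem _ _ hwmem
    -- τ w is killed by f, so x • w ∈ ker τ = range ρ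
    have h0 : (fun i => f (τ.mulVec w i)) = 0 := by
      rw [← map_mulVec', hfw, Matrix.mulVec_smul, hv, smul_zero]
    have hx0 : τ.mulVec (x • w) = 0 := by
      funext i
      have : τ.mulVec w i * x = 0 := (hker _).mp (congrFun h0 i)
      calc τ.mulVec (x • w) i = x * τ.mulVec w i := by
            simp [Matrix.mulVec_smul, smul_eq_mul]
        _ = 0 := by rw [mul_comm]; exact this
    have hxw : x • w ∈ LinearMap.range ρ.mulVecLin := by
      rw [← hexact, LinearMap.mem_ker, Matrix.mulVecLin_apply]; exact hx0
    obtain ⟨u, hu⟩ := hxw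
    rw [Matrix.mulVecLin_apply] at hu
    -- annihilation property of u
    have hannu : ∀ a : A, a * x = 0 → a • u = 0 := by
      intro a ha
      have h1 : ρ.mulVec (a • u) = 0 := by
        rw [Matrix.mulVec_smul, hu]
        funext i
        simp only [Pi.smul_apply, smul_eq_mul, Pi.zero_apply]
        rw [← mul_assoc, ha, zero_mul]
      have : a • u ∈ LinearMap.ker ρ.mulVecLin := by
        rw [LinearMap.mem_ker, Matrix.mulVecLin_apply]; exact h1
      rwa [hinj, Submodule.mem_bot] at this
    -- duality argument
    by_contra hnot
    set W := LinearMap.range (ρ.map f).mulVecLin with hW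
    have hq : Submodule.Quotient.mk (p := W) (fun j => f (w j)) ≠ 0 := by
      rw [Ne, Submodule.Quotient.mk_eq_zero]
      exact hnot
    obtain ⟨φ, hφ⟩ : ∃ φ : Module.Dual K (((Fin n ⊕ Fin n) → K) ⧸ W), φ (Submodule.Quotient.mk (fun j => f (w j))) ≠ 0 := by
      by_contra h
      push_neg at h
      exact hq ((Module.forall_dual_apply_eq_zero_iff K _).mp h)
    set lam : ((Fin n ⊕ Fin n) → K) →ₗ[K] K := φ.comp W.mkQ with hlam
    have hlam0 : ∀ z ∈ W, lam z = 0 := by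
      intro z hz
      simp only [hlam, LinearMap.comp_apply, Submodule.mkQ_apply]
      rw [(Submodule.Quotient.mk_eq_zero _).mpr hz, map_zero]
    have hlamw : lam (fun j => f (w j)) ≠ 0 := hφ
    set lv : (Fin n ⊕ Fin n) → K := fun i => lam (Pi.single i 1) with hlv
    have hlam_eq : ∀ z : (Fin n ⊕ Fin n) → K, lam z = ∑ i, z i * lv i := by
      intro z
      conv_lhs => rw [pi_eq_sum_univ z]
      rw [map_sum]
      refine Finset.sum_congr rfl fun i _ => ?_
      rw [_root_.map_smul, smul_eq_mul, hlv]
      congr 2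
      funext j
      by_cases hji : i = j <;> simp [Pi.single_apply, hji, eq_comm]
    obtain ⟨u', s', hs', hu'⟩ := hd1 lv
    have hcols : ∀ j, f (Matrix.vecMul u' ρ j) = 0 := by
      intro j
      have hcol : (fun i => f (ρ i j)) = (ρ.map f).mulVec (Pi.single j 1) := by
        funext i
        simp [Matrix.mulVec_single]
      have hz : lam ((ρ.map f).mulVec (Pi.single j 1)) = 0 :=
        hlam0 _ ⟨Pi.single j 1, by rw [Matrix.mulVecLin_apply]⟩
      rw [hlam_eq, ← hcol] at hz
      have : f s' * (∑ i, f (ρ i j) * lv i) = 0 := by rw [hz, mul_zero]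
      rw [Finset.mul_sum] at this
      have heq : ∀ i, f s' * (f (ρ i j) * lv i) = f (u' i) * f (ρ i j) := by
        intro i
        rw [← hu' i]
        ring
      rw [Finset.sum_congr rfl (fun i _ => heq i)] at this
      have : f (∑ i, u' i * ρ i j) = 0 := by
        rw [map_sum]
        rw [← this]
        exact Finset.sum_congr rfl fun i _ => by rw [_root_.map_mul]
      simpa [Matrix.vecMul, dotProduct] using this
    have hdot : (dotProduct u' w) * x = 0 := by
      have h1 : x * dotProduct u' w = dotProduct u' (x • w) := by
        rw [dotProduct, dotProduct, Finset.mul_sum]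
        exact Finset.sum_congr rfl fun i _ => by rw [Pi.smul_apply, smul_eq_mul]; ring
      rw [mul_comm]
      rw [h1, ← hu, dotProduct_mulVec]
      have : ∀ j, Matrix.vecMul u' ρ j * u j = 0 := by
        intro j
        have ha : Matrix.vecMul u' ρ j * x = 0 := (hker _).mp (hcols j)
        have := congrFun (hannu _ ha) j
        rw [Pi.smul_apply, smul_eq_mul] at this
        exact this
      simp [dotProduct]
      exact Finset.sum_eq_zero fun j _ => this j
    have hfdot : f (dotProduct u' w) = 0 := (hker _).mpr hdot
    rw [dotProduct, map_sum] at hfdot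
    have hterm : ∀ i, f (u' i * w i) = f s' * (f (w i) * lv i) := by
      intro i
      rw [_root_.map_mul, ← hu' i]
      ring
    rw [Finset.sum_congr rfl (fun i _ => hterm i), ← Finset.mul_sum] at hfdot
    have hfin : (∑ i, f (w i) * lv i) = 0 := by
      rcases mul_eq_zero.mp hfdot with h | h
      · exact absurd h hs'
      · exact h
    rw [← hlam_eq] at hfin
    exact hlamw hfin
  -- dimension count
  have hkerT : LinearMap.ker (τ.map f).mulVecLin = LinearMap.range (ρ.map f).mulVecLin := by
    refine le_antisymm hsub ?_
    rintro z ⟨u, rfl⟩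
    rw [LinearMap.mem_ker, Matrix.mulVecLin_apply, Matrix.mulVecLin_apply]
    exact hcompK u
  have hrk1 : Module.finrank K (LinearMap.range (ρ.map f).mulVecLin) = n := by
    have h := LinearMap.finrank_range_add_finrank_ker (ρ.map f).mulVecLin
    rw [hinjK, finrank_bot, add_zero, Module.finrank_pi, Fintype.card_fin] at h
    exact h
  have hrk2 : Module.finrank K (LinearMap.range (τ.map f).mulVecLin) = n := by
    have h := LinearMap.finrank_range_add_finrank_ker (τ.map f).mulVecLin
    rw [hkerT, hrk1, Module.finrank_pi] at h
    simp only [Fintype.card_sum, Fintype.card_fin] at h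
    omega
  rw [← LinearMap.range_eq_top]
  apply Submodule.eq_top_of_finrank_eq
  rw [hrk2, Module.finrank_pi, Fintype.card_fin]


/-- The canonical map from `A` to the fraction field of `A ⧸ p`. -/
noncomputable def resHom (A : Type*) [CommRing A] (p : Ideal A) :
    A →+* FractionRing (A ⧸ p) :=
  (algebraMap (A ⧸ p) (FractionRing (A ⧸ p))).comp (Ideal.Quotient.mk p)

lemma resHom_eq_zero_iff {A : Type*} [CommRing A] (p : Ideal A) [p.IsPrime] (a : A) :
    resHom A p a = 0 ↔ a ∈ p := by
  rw [resHom, RingHom.comp_apply, IsFractionRing.to_map_eq_zero_iff,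
    Ideal.Quotient.eq_zero_iff_mem]

lemma resHom_denom {A : Type*} [CommRing A] (p : Ideal A) [p.IsPrime]
    {ι : Type*} [Fintype ι] (v : ι → FractionRing (A ⧸ p)) :
    ∃ (w : ι → A) (s : A), resHom A p s ≠ 0 ∧ ∀ i, resHom A p s * v i = resHom A p (w i) := by
  obtain ⟨b, hb⟩ := IsLocalization.exist_integer_multiples (nonZeroDivisors (A ⧸ p))
    Finset.univ v
  choose c hc using fun i => hb i (Finset.mem_univ i)
  obtain ⟨s, hs⟩ := Ideal.Quotient.mk_surjective (b : A ⧸ p)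
  choose w hw using fun i => Ideal.Quotient.mk_surjective (c i)
  refine ⟨w, s, ?_, ?_⟩
  · rw [resHom, RingHom.comp_apply, hs]
    intro h
    exact nonZeroDivisors.ne_zero b.2 (IsFractionRing.to_map_eq_zero_iff.mp h)
  · intro i
    rw [resHom, RingHom.comp_apply, RingHom.comp_apply, hs, hw i, hc i,
      Algebra.smul_def]

/-- **Lemma 3.2 (regularizing a minor).**  Given an exact sequence
`0 → Aⁿ →(ρ₁; ρ₂) A^{2n} →(τ₁ τ₂) Aⁿ → M → 0` over a Cohen-Macaulay Noetherian local ring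
`A` (not necessarily a domain), there is a base change `P ∈ GL_{2n}(A)` such that for
`(τ₁' τ₂') = (τ₁ τ₂) · P` the determinant `det τ₁'` avoids every associated prime of `A`,
i.e. `det τ₁'` is a nonzerodivisor on `A`. -/
theorem exists_base_change_det_regular
    (A : Type) [CommRing A] [IsLocalRing A] [IsNoetherianRing A] (hCM : IsCMLocalRing A)
    (M : Type) [AddCommGroup M] [Module A M]
    (n : ℕ) (τ₁ τ₂ ρ₁ ρ₂ : Matrix (Fin n) (Fin n) A)
    (p : (Fin n → A) →ₗ[A] M)
    (hres : IsFreeRes₂ A (fromCols τ₁ τ₂) (fromRows ρ₁ ρ₂) p) :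
    ∃ P : Matrix (Fin n ⊕ Fin n) (Fin n ⊕ Fin n) A, IsUnit P.det ∧
      (∀ q ∈ associatedPrimes A A, (toCols₁ (fromCols τ₁ τ₂ * P)).det ∉ q) ∧
      (toCols₁ (fromCols τ₁ τ₂ * P)).det ∈ nonZeroDivisors A := by
  classical
  obtain ⟨hres1, hres2, hexact, hinj⟩ := hres
  set τm : Matrix (Fin n) (Fin n ⊕ Fin n) A := fromCols τ₁ τ₂ with hτm
  set ρm : Matrix (Fin n ⊕ Fin n) (Fin n) A := fromRows ρ₁ ρ₂ with hρm
  have hAfin : (associatedPrimes A A).Finite := associatedPrimes_finite A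
  set AssS : Finset (Ideal A) := hAfin.toFinset with hAssS
  have hAssS_mem : ∀ q : Ideal A, q ∈ AssS ↔ IsAssociatedPrime q A := fun q =>
    Set.Finite.mem_toFinset _
  set mI : Ideal A := IsLocalRing.maximalIdeal A with hmIdef
  haveI hmprime : mI.IsPrime := (IsLocalRing.maximalIdeal.isMaximal A).isPrime
  have hqprime : ∀ q ∈ AssS, q.IsPrime := fun q hq => ((hAssS_mem q).mp hq).isPrime
  have hTsurj : ∀ q ∈ AssS, Function.Surjective ((τm.map (resHom A q)).mulVecLin) := by
    intro q hq
    obtain ⟨hqp, x, hx⟩ := isAssociatedPrime_iff.mp ((hAssS_mem q).mp hq)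
    haveI := hqp
    refine key_surjective (resHom A q) x ?_ τm ρm hexact hinj
      (fun v => resHom_denom q v) (fun v => resHom_denom q v)
    intro a
    rw [resHom_eq_zero_iff, hx, Submodule.mem_colon_singleton, Submodule.mem_bot, smul_eq_mul]
  -- Phase 1: construct the first `n` columns
  have P1 : ∀ j : ℕ, j ≤ n → ∃ c : Fin j → (Fin n ⊕ Fin n → A),
      (∀ q ∈ AssS, LinearIndependent (FractionRing (A ⧸ q))
        (fun i : Fin j => (τm.map (resHom A q)).mulVec (fun k => resHom A q (c i k)))) ∧
      LinearIndependent (FractionRing (A ⧸ mI))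
        (fun i : Fin j => (fun k => resHom A mI (c i k))) := by
    intro j
    induction j with
    | zero =>
      intro _
      exact ⟨fun _ => 0, fun q hq => linearIndependent_empty_type,
        linearIndependent_empty_type⟩
    | succ j ihj =>
      intro hj
      obtain ⟨c, hcq, hcm⟩ := ihj (Nat.le_of_succ_le hj)
      set S : Finset (Ideal A) := insert mI AssS with hS
      set U : Ideal A → Submodule A (Fin n ⊕ Fin n → A) := fun pp =>
        if hp : pp ∈ AssS then
          preSub (resHom A pp) (Submodule.comap ((τm.map (resHom A pp)).mulVecLin)
            (Submodule.span (FractionRing (A ⧸ pp)) (Set.range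
              (fun i : Fin j => (τm.map (resHom A pp)).mulVec (fun k => resHom A pp (c i k))))))
        else
          preSub (resHom A mI) (Submodule.span (FractionRing (A ⧸ mI)) (Set.range
            (fun i : Fin j => (fun k => resHom A mI (c i k)))))
        with hU
      have hprimeS : ∀ pp ∈ S, pp.IsPrime := by
        intro pp hpp
        rcases Finset.mem_insert.mp hpp with rfl | hpp
        · exact hmprime
        · exact hqprime pp hpp
      have hmemU : ∀ pp ∈ S, ∀ a ∈ pp, ∀ z : (Fin n ⊕ Fin n → A), a • z ∈ U pp := by
        intro pp hpp a ha z
        by_cases hp : pp ∈ AssS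
        · haveI := hqprime pp hp
          simp only [hU, dif_pos hp]
          exact preSub_smul_mem _ _ ((resHom_eq_zero_iff pp a).mpr ha) z
        · have hppm : pp = mI := by
            rcases Finset.mem_insert.mp hpp with h | h
            · exact h
            · exact absurd h hp
          simp only [hU, dif_neg hp]
          exact preSub_smul_mem _ _ ((resHom_eq_zero_iff mI a).mpr (hppm ▸ ha)) z
      have hsatU : ∀ pp ∈ S, ∀ a ∉ pp, ∀ z : (Fin n ⊕ Fin n → A),
          a • z ∈ U pp → z ∈ U pp := by
        intro pp hpp a ha z hz
        by_cases hp : pp ∈ AssS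
        · haveI := hqprime pp hp
          simp only [hU, dif_pos hp] at hz ⊢
          refine preSub_sat _ _ ?_ z hz
          rw [Ne, resHom_eq_zero_iff]; exact ha
        · have hppm : pp = mI := by
            rcases Finset.mem_insert.mp hpp with h | h
            · exact h
            · exact absurd h hp
          rw [hppm] at ha
          simp only [hU, dif_neg hp] at hz ⊢
          refine preSub_sat _ _ ?_ z hz
          rw [Ne, resHom_eq_zero_iff]; exact ha
      have hwitU : ∀ pp ∈ S, ∃ d, d ∉ U pp := by
        intro pp hpp
        by_cases hp : pp ∈ AssS
        · haveI := hqprime pp hp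
          simp only [hU, dif_pos hp]
          refine preSub_wit _ _ ?_
          refine comap_ne_top' _ (hTsurj pp hp) ?_
          refine span_range_ne_top ?_ _
          rw [Module.finrank_pi, Fintype.card_fin]
          omega
        · simp only [hU, dif_neg hp]
          refine preSub_wit _ _ ?_
          refine span_range_ne_top ?_ _
          rw [Module.finrank_pi]
          simp only [Fintype.card_sum, Fintype.card_fin]
          omega
      obtain ⟨d, hd⟩ := avoid_lemma S hprimeS U hmemU hsatU hwitU
      refine ⟨Fin.snoc c d, ?_, ?_⟩
      · intro q hq
        haveI := hqprime q hq
        have hdq := hd q (Finset.mem_insert_of_mem hq)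
        simp only [hU, dif_pos hq, mem_preSub, Submodule.mem_comap] at hdq
        have hfam := comp_snoc'
          (fun z : Fin n ⊕ Fin n → A =>
            (τm.map (resHom A q)).mulVec (fun k => resHom A q (z k))) c d
        rw [hfam, linearIndependent_fin_snoc]
        refine ⟨hcq q hq, ?_⟩
        intro hmem'
        apply hdq
        rw [Matrix.mulVecLin_apply]
        exact hmem'
      · have hdm := hd mI (Finset.mem_insert_self _ _)
        have hfam := comp_snoc'
          (fun z : Fin n ⊕ Fin n → A => (fun k => resHom A mI (z k))) c d
        rw [hfam, linearIndependent_fin_snoc]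
        refine ⟨hcm, ?_⟩
        by_cases hm : mI ∈ AssS
        · simp only [hU, dif_pos hm, mem_preSub, Submodule.mem_comap] at hdm
          intro hmem'
          apply hdm
          rw [Matrix.mulVecLin_apply]
          have h2 : ((τm.map (resHom A mI)).mulVecLin) (fun k => resHom A mI (d k)) ∈
              Submodule.map ((τm.map (resHom A mI)).mulVecLin)
                (Submodule.span (FractionRing (A ⧸ mI))
                  (Set.range (fun i : Fin j => fun k => resHom A mI (c i k)))) :=
            Submodule.mem_map_of_mem hmem'
          rw [Submodule.map_span, ← Set.range_comp] at h2
          have hre : (⇑((τm.map (resHom A mI)).mulVecLin) ∘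
              (fun i : Fin j => fun k => resHom A mI (c i k))) =
              (fun i : Fin j => (τm.map (resHom A mI)).mulVec (fun k => resHom A mI (c i k))) := by
            funext i
            exact Matrix.mulVecLin_apply _ _
          rw [hre] at h2
          rw [Matrix.mulVecLin_apply] at h2
          exact h2
        · simp only [hU, dif_neg hm, mem_preSub] at hdm
          exact hdm
  obtain ⟨c1, hc1q, hc1m⟩ := P1 n le_rfl
  -- Phase 2: extend to `2n` columns
  have P2 : ∀ j : ℕ, j ≤ n → ∃ c : Fin (n + j) → (Fin n ⊕ Fin n → A),
      (∀ i : Fin n, c (Fin.castLE (Nat.le_add_right n j) i) = c1 i) ∧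
      LinearIndependent (FractionRing (A ⧸ mI))
        (fun i : Fin (n + j) => (fun k => resHom A mI (c i k))) := by
    intro j
    induction j with
    | zero =>
      intro _
      exact ⟨c1, fun i => congrArg c1 (Fin.ext rfl), hc1m⟩
    | succ j ihj =>
      intro hj
      obtain ⟨c, hcfst, hcm⟩ := ihj (Nat.le_of_succ_le hj)
      set U : Ideal A → Submodule A (Fin n ⊕ Fin n → A) := fun _ =>
        preSub (resHom A mI) (Submodule.span (FractionRing (A ⧸ mI)) (Set.range
          (fun i : Fin (n + j) => (fun k => resHom A mI (c i k))))) with hU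
      have havoid := avoid_lemma {mI}
        (by intro pp hpp; rw [Finset.mem_singleton] at hpp; subst hpp; exact hmprime) U
        (by
          intro pp hpp a ha z
          rw [Finset.mem_singleton] at hpp; subst hpp
          simp only [hU]
          exact preSub_smul_mem _ _ ((resHom_eq_zero_iff mI a).mpr ha) z)
        (by
          intro pp hpp a ha z hz
          rw [Finset.mem_singleton] at hpp; subst hpp
          simp only [hU] at hz ⊢
          refine preSub_sat _ _ ?_ z hz
          rw [Ne, resHom_eq_zero_iff]; exact ha)
        (by
          intro pp hpp
          simp only [hU]
          refine preSub_wit _ _ ?_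
          refine span_range_ne_top ?_ _
          rw [Module.finrank_pi]
          simp only [Fintype.card_sum, Fintype.card_fin]
          omega)
      obtain ⟨d, hd⟩ := havoid
      refine ⟨Fin.snoc c d, ?_, ?_⟩
      · intro i
        have hcast : (Fin.castLE (Nat.le_add_right n (j + 1)) i : Fin (n + (j + 1))) =
            Fin.castSucc (Fin.castLE (Nat.le_add_right n j) i) := Fin.ext rfl
        rw [hcast, Fin.snoc_castSucc]
        exact hcfst i
      · have hfam := comp_snoc'
          (fun z : Fin n ⊕ Fin n → A => (fun k => resHom A mI (z k))) c d
        show LinearIndependent (FractionRing (A ⧸ mI))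
          (fun i : Fin ((n + j) + 1) =>
            (fun k => resHom A mI ((Fin.snoc c d : Fin ((n + j) + 1) → _) i k)))
        rw [hfam, linearIndependent_fin_snoc]
        refine ⟨hcm, ?_⟩
        have hdm := hd mI (Finset.mem_singleton_self _)
        simp only [hU, mem_preSub] at hdm
        exact hdm
  obtain ⟨c, hcfst, hcm⟩ := P2 n le_rfl
  set e : (Fin n ⊕ Fin n) ≃ Fin (n + n) := finSumFinEquiv with he
  set P : Matrix (Fin n ⊕ Fin n) (Fin n ⊕ Fin n) A :=
    Matrix.of (fun i j' => c (e j') i) with hP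
  set Q : Matrix (Fin (n + n)) (Fin (n + n)) A :=
    Matrix.of (fun i j' => c j' (e.symm i)) with hQ
  have hPQ : P = Q.submatrix e e := by
    ext i j'
    simp [hP, hQ, Matrix.submatrix_apply]
  have hdetPQ : P.det = Q.det := by rw [hPQ, Matrix.det_submatrix_equiv_self]
  have hdetQ : resHom A mI Q.det ≠ 0 := by
    intro h0
    rw [RingHom.map_det] at h0
    obtain ⟨v, hvne, hv⟩ := Matrix.exists_mulVec_eq_zero_iff.mpr h0
    apply hvne
    funext j'
    refine Fintype.linearIndependent_iff.mp hcm v ?_ j'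
    funext k
    have h1 := congrFun hv (e k)
    simp only [Matrix.mulVec, dotProduct, RingHom.mapMatrix_apply, Matrix.map_apply,
      hQ, Matrix.of_apply, Equiv.symm_apply_apply, Pi.zero_apply] at h1
    simp only [Finset.sum_apply, Pi.smul_apply, smul_eq_mul, Pi.zero_apply]
    rw [← h1]
    exact Finset.sum_congr rfl fun j'' _ => mul_comm _ _
  have hdetP_unit : IsUnit P.det := by
    by_contra hu
    have hmem : P.det ∈ mI := by
      rw [hmIdef]
      exact hu
    apply hdetQ
    rw [← hdetPQ]
    exact (resHom_eq_zero_iff mI _).mpr hmem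
  set C : Matrix (Fin n ⊕ Fin n) (Fin n) A := P.toCols₁ with hC
  have hTC : (τm * P).toCols₁ = τm * C := toCols₁_mul τm P
  have hCc1 : ∀ (j : Fin n) (k : Fin n ⊕ Fin n), C k j = c1 j k := by
    intro j k
    have he1 : e (Sum.inl j) = Fin.castLE (Nat.le_add_right n n) j := by
      rw [he, finSumFinEquiv_apply_left]
      exact Fin.ext rfl
    have : C k j = c (e (Sum.inl j)) k := rfl
    rw [this, he1, hcfst j]
  have hqgoal : ∀ q ∈ associatedPrimes A A, ((τm * P).toCols₁).det ∉ q := by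
    intro q hq' hdet
    have hq : q ∈ AssS := (hAssS_mem q).mpr hq'
    haveI := hqprime q hq
    rw [hTC] at hdet
    have h0 : resHom A q ((τm * C).det) = 0 := (resHom_eq_zero_iff q _).mpr hdet
    rw [RingHom.map_det] at h0
    obtain ⟨v, hvne, hv⟩ := Matrix.exists_mulVec_eq_zero_iff.mpr h0
    apply hvne
    funext j
    refine Fintype.linearIndependent_iff.mp (hc1q q hq) v ?_ j
    funext r
    have h1 := congrFun hv r
    simp only [Matrix.mulVec, dotProduct, RingHom.mapMatrix_apply, Matrix.map_apply,
      Pi.zero_apply] at h1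
    simp only [Finset.sum_apply, Pi.smul_apply, smul_eq_mul, Pi.zero_apply, Matrix.mulVec,
      dotProduct, Matrix.map_apply]
    rw [← h1]
    refine Finset.sum_congr rfl fun jj _ => ?_
    rw [mul_comm]
    congr 1
    rw [Matrix.mul_apply, map_sum]
    refine Finset.sum_congr rfl fun k _ => ?_
    rw [_root_.map_mul, hCc1 jj k]
  have hnzd : ((τm * P).toCols₁).det ∈ nonZeroDivisors A := by
    rw [mem_nonZeroDivisors_iff_right]
    intro z hz
    by_contra hzne
    obtain ⟨q, hq, hle⟩ := exists_le_isAssociatedPrime_of_isNoetherianRing A z hzne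
    apply hqgoal q hq
    apply hle
    rw [Submodule.mem_colon_singleton, Submodule.mem_bot, smul_eq_mul, mul_comm]
    exact hz
  exact ⟨P, hdetP_unit, hqgoal, hnzd⟩
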